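/- If Ξ_b = diag(Ξ₁,…,Ξ_k) certifies passivity of each subsystem block-wise (each Ξ_j = Ξ_jᵀ ≻ 0 satisfies the positive real LMI for (A_j,B_j,C_j,D_j)), S ⪰ 0, and I+SD_b invertible with D_b = diag(D₁,…,D_k), then for the closed-loop interconnected system with external input matrix ℬ, for all states x_b and inputs u_c, d/dt(x_bᵀΞ_bx_b) ≤ 2 y_cᵀu_c − 2 z_bᵀS z_b ≤ 2 y_cᵀu_c along trajectories, where z_b is the internal output and y_c = ℬᵀz_b. -/

import Mathlib

open Matrix

def NegSemidef {m : Type*} [Fintype m] (M : Matrix m m ℝ) : Prop :=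
  ∀ z : m → ℝ, z ⬝ᵥ (M *ᵥ z) ≤ 0

lemma dot_tmul {m n : Type*} [Fintype m] [Fintype n] (M : Matrix m n ℝ) (x : m → ℝ) (y : n → ℝ) :
    x ⬝ᵥ (M *ᵥ y) = (Mᵀ *ᵥ x) ⬝ᵥ y := by
  rw [dotProduct_mulVec, mulVec_transpose]

lemma bd_mulVec {k : ℕ} {m q : Fin k → ℕ} (M : ∀ j, Matrix (Fin (m j)) (Fin (q j)) ℝ)
    (x : (Σ j, Fin (q j)) → ℝ) (j : Fin k) (i : Fin (m j)) :
    (blockDiagonal' M *ᵥ x) ⟨j, i⟩ = (M j *ᵥ fun i' => x ⟨j, i'⟩) i := by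
  simp only [mulVec, dotProduct]
  rw [← Finset.univ_sigma_univ, Finset.sum_sigma]
  rw [Finset.sum_eq_single j]
  · simp [blockDiagonal'_apply_eq]
  · intro j' _ hj'
    apply Finset.sum_eq_zero
    intro i' _
    rw [blockDiagonal'_apply_ne _ _ _ (Ne.symm hj'), zero_mul]
  · simp

lemma dot_sigma {k : ℕ} {m : Fin k → ℕ} (x y : (Σ j, Fin (m j)) → ℝ) :
    x ⬝ᵥ y = ∑ j, (fun i => x ⟨j, i⟩) ⬝ᵥ (fun i => y ⟨j, i⟩) := by
  simp only [dotProduct]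
  rw [← Finset.univ_sigma_univ, Finset.sum_sigma]

lemma block_ineq {nn pp : ℕ} (A : Matrix (Fin nn) (Fin nn) ℝ) (B : Matrix (Fin nn) (Fin pp) ℝ)
    (C : Matrix (Fin pp) (Fin nn) ℝ) (D : Matrix (Fin pp) (Fin pp) ℝ)
    (Ξ : Matrix (Fin nn) (Fin nn) ℝ) (hsym : Ξᵀ = Ξ)
    (h : NegSemidef (fromBlocks (Aᵀ * Ξ + Ξ * A) (Ξ * B - Cᵀ) (Bᵀ * Ξ - C) (-(D + Dᵀ))))
    (x : Fin nn → ℝ) (v : Fin pp → ℝ) :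
    x ⬝ᵥ (Ξ *ᵥ (A *ᵥ x + B *ᵥ v)) - (C *ᵥ x + D *ᵥ v) ⬝ᵥ v ≤ 0 := by
  have h2 := h (Sum.elim x v)
  rw [fromBlocks_mulVec, sumElim_dotProduct_sumElim] at h2
  have e1 : x ⬝ᵥ ((Aᵀ * Ξ) *ᵥ x) = x ⬝ᵥ (Ξ *ᵥ (A *ᵥ x)) := by
    rw [← mulVec_mulVec, dot_tmul Aᵀ, transpose_transpose, dot_tmul Ξ, hsym, dotProduct_comm]
  have e3 : v ⬝ᵥ ((Bᵀ * Ξ) *ᵥ x) = x ⬝ᵥ (Ξ *ᵥ (B *ᵥ v)) := by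
    rw [← mulVec_mulVec, dot_tmul Bᵀ, transpose_transpose, dot_tmul Ξ, hsym, dotProduct_comm]
  have e2 : x ⬝ᵥ (Cᵀ *ᵥ v) = (C *ᵥ x) ⬝ᵥ v := by
    rw [dot_tmul, transpose_transpose]
  have e4 : v ⬝ᵥ (Dᵀ *ᵥ v) = (D *ᵥ v) ⬝ᵥ v := by
    rw [dot_tmul, transpose_transpose]
  have e5 : v ⬝ᵥ (D *ᵥ v) = (D *ᵥ v) ⬝ᵥ v := dotProduct_comm _ _
  have e25 : (ΞA : Matrix (Fin nn) (Fin nn) ℝ) → True := fun _ => trivial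
  simp only [add_mulVec, sub_mulVec, neg_mulVec, mulVec_add, dotProduct_add, dotProduct_sub,
    dotProduct_neg, Sum.elim_comp_inl, Sum.elim_comp_inr, add_dotProduct, e1, e2, e3, e4, e5] at h2 ⊢
  have e6 : x ⬝ᵥ ((Ξ * A) *ᵥ x) = x ⬝ᵥ (Ξ *ᵥ (A *ᵥ x)) := by rw [← mulVec_mulVec]
  have e7 : x ⬝ᵥ ((Ξ * B) *ᵥ v) = x ⬝ᵥ (Ξ *ᵥ (B *ᵥ v)) := by rw [← mulVec_mulVec]
  have e8 : v ⬝ᵥ (C *ᵥ x) = (C *ᵥ x) ⬝ᵥ v := dotProduct_comm _ _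
  rw [e6, e7, e8] at h2
  linarith

lemma sum_block_ineq {k : ℕ} {n p : Fin k → ℕ}
    (A : ∀ j, Matrix (Fin (n j)) (Fin (n j)) ℝ)
    (B : ∀ j, Matrix (Fin (n j)) (Fin (p j)) ℝ)
    (C : ∀ j, Matrix (Fin (p j)) (Fin (n j)) ℝ)
    (D : ∀ j, Matrix (Fin (p j)) (Fin (p j)) ℝ)
    (Ξ : ∀ j, Matrix (Fin (n j)) (Fin (n j)) ℝ)
    (hsym : ∀ j, (Ξ j)ᵀ = Ξ j)
    (hLMI : ∀ j, NegSemidef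
      (fromBlocks ((A j)ᵀ * Ξ j + Ξ j * A j) (Ξ j * B j - (C j)ᵀ)
        ((B j)ᵀ * Ξ j - C j) (-(D j + (D j)ᵀ))))
    (x : (Σ j, Fin (n j)) → ℝ) (v : (Σ j, Fin (p j)) → ℝ) :
    x ⬝ᵥ (blockDiagonal' Ξ *ᵥ (blockDiagonal' A *ᵥ x + blockDiagonal' B *ᵥ v))
      - (blockDiagonal' C *ᵥ x + blockDiagonal' D *ᵥ v) ⬝ᵥ v ≤ 0 := by
  have hdec : x ⬝ᵥ (blockDiagonal' Ξ *ᵥ (blockDiagonal' A *ᵥ x + blockDiagonal' B *ᵥ v))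
      - (blockDiagonal' C *ᵥ x + blockDiagonal' D *ᵥ v) ⬝ᵥ v
      = ∑ j, ((fun i => x ⟨j, i⟩) ⬝ᵥ (Ξ j *ᵥ (A j *ᵥ (fun i => x ⟨j, i⟩) + B j *ᵥ (fun i => v ⟨j, i⟩)))
          - (C j *ᵥ (fun i => x ⟨j, i⟩) + D j *ᵥ (fun i => v ⟨j, i⟩)) ⬝ᵥ (fun i => v ⟨j, i⟩)) := by
    rw [dot_sigma x, dot_sigma _ v, ← Finset.sum_sub_distrib]
    apply Finset.sum_congr rfl
    intro j _
    congr 1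
    · congr 1
      funext i
      rw [bd_mulVec]
      congr 1
      funext i'
      simp only [Pi.add_apply, bd_mulVec]
    · congr 1
      funext i
      simp only [Pi.add_apply, bd_mulVec]
  rw [hdec]
  apply Finset.sum_nonpos
  intro j _
  exact block_ineq _ _ _ _ _ (hsym j) (hLMI j) _ _

/-- if block-diagonal `Ξ_b = diag(Ξ₁,…,Ξ_k)` certifies passivity of
each subsystem, `S ⪰ 0` and `I + S D_b` is invertible, then along closed-loop
trajectories `d/dt (x_bᵀ Ξ_b x_b) ≤ 2 y_cᵀ u_c − 2 z_bᵀ S z_b ≤ 2 y_cᵀ u_c`,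
where `z_b = (I + D_b S)⁻¹ (C_b x_b + D_b 𝓑 u_c)` and `y_c = 𝓑ᵀ z_b`. -/
theorem stmt14 {k pc : ℕ} (n p : Fin k → ℕ)
    (A : ∀ j, Matrix (Fin (n j)) (Fin (n j)) ℝ)
    (B : ∀ j, Matrix (Fin (n j)) (Fin (p j)) ℝ)
    (C : ∀ j, Matrix (Fin (p j)) (Fin (n j)) ℝ)
    (D : ∀ j, Matrix (Fin (p j)) (Fin (p j)) ℝ)
    (Ξ : ∀ j, Matrix (Fin (n j)) (Fin (n j)) ℝ)
    (hΞ : ∀ j, (Ξ j).PosDef)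
    (hLMI : ∀ j, NegSemidef
      (fromBlocks ((A j)ᵀ * Ξ j + Ξ j * A j) (Ξ j * B j - (C j)ᵀ)
        ((B j)ᵀ * Ξ j - C j) (-(D j + (D j)ᵀ))))
    (S : Matrix (Σ j, Fin (p j)) (Σ j, Fin (p j)) ℝ) (hS : S.PosSemidef)
    (𝓑 : Matrix (Σ j, Fin (p j)) (Fin pc) ℝ)
    (hSD : IsUnit (1 + S * blockDiagonal' D))
    (hDS : IsUnit (1 + blockDiagonal' D * S)) :
    ∀ (x : (Σ j, Fin (n j)) → ℝ) (uc : Fin pc → ℝ),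
      let Ab := blockDiagonal' A
      let Bb := blockDiagonal' B
      let Cb := blockDiagonal' C
      let Db := blockDiagonal' D
      let Ξb := blockDiagonal' Ξ
      let Ac := Ab - Bb * (1 + S * Db)⁻¹ * S * Cb
      let Bc := Bb * (1 + S * Db)⁻¹ * 𝓑
      let zb := (1 + Db * S)⁻¹ *ᵥ (Cb *ᵥ x + Db *ᵥ (𝓑 *ᵥ uc))
      let yc := 𝓑ᵀ *ᵥ zb
      2 * (x ⬝ᵥ (Ξb *ᵥ (Ac *ᵥ x + Bc *ᵥ uc)))
          ≤ 2 * (yc ⬝ᵥ uc) - 2 * (zb ⬝ᵥ (S *ᵥ zb)) ∧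
      2 * (x ⬝ᵥ (Ξb *ᵥ (Ac *ᵥ x + Bc *ᵥ uc))) ≤ 2 * (yc ⬝ᵥ uc) := by
  intro x uc
  intro Ab Bb Cb Db Ξb Ac Bc zb yc
  have hAb : Ab = blockDiagonal' A := rfl
  have hBb : Bb = blockDiagonal' B := rfl
  have hCb : Cb = blockDiagonal' C := rfl
  have hDb : Db = blockDiagonal' D := rfl
  have hΞb : Ξb = blockDiagonal' Ξ := rfl
  have hzbdef : zb = (1 + Db * S)⁻¹ *ᵥ (Cb *ᵥ x + Db *ᵥ (𝓑 *ᵥ uc)) := rfl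
  have hycdef : yc = 𝓑ᵀ *ᵥ zb := rfl
  have hAcdef : Ac = Ab - Bb * (1 + S * Db)⁻¹ * S * Cb := rfl
  have hBcdef : Bc = Bb * (1 + S * Db)⁻¹ * 𝓑 := rfl
  have hdet1 : IsUnit (1 + Db * S).det := (Matrix.isUnit_iff_isUnit_det _).mp hDS
  have hdet2 : IsUnit (1 + S * Db).det := (Matrix.isUnit_iff_isUnit_det _).mp hSD
  set v : (Σ j, Fin (p j)) → ℝ := 𝓑 *ᵥ uc - S *ᵥ zb with hv
  -- zb satisfies the implicit equation
  have hz : (1 + Db * S) *ᵥ zb = Cb *ᵥ x + Db *ᵥ (𝓑 *ᵥ uc) := by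
    rw [hzbdef, mulVec_mulVec, Matrix.mul_nonsing_inv _ hdet1, one_mulVec]
  have h1 : zb = Cb *ᵥ x + Db *ᵥ v := by
    rw [add_mulVec, one_mulVec, ← mulVec_mulVec] at hz
    rw [hv, mulVec_sub]
    linear_combination (norm := module) hz
  have hveq : (1 + S * Db) *ᵥ v = 𝓑 *ᵥ uc - S *ᵥ (Cb *ᵥ x) := by
    rw [add_mulVec, one_mulVec, ← mulVec_mulVec]
    have hd : Db *ᵥ v = zb - Cb *ᵥ x := by rw [h1]; abel
    rw [hd, mulVec_sub, hv]
    abel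
  have hv' : v = (1 + S * Db)⁻¹ *ᵥ (𝓑 *ᵥ uc - S *ᵥ (Cb *ᵥ x)) := by
    rw [← hveq, mulVec_mulVec, Matrix.nonsing_inv_mul _ hdet2, one_mulVec]
  have h2 : Ac *ᵥ x + Bc *ᵥ uc = Ab *ᵥ x + Bb *ᵥ v := by
    rw [hAcdef, hBcdef, hv', mulVec_sub, sub_mulVec]
    simp only [← mulVec_mulVec, mulVec_add, mulVec_sub]
    abel
  have hsym : ∀ j, (Ξ j)ᵀ = Ξ j := by
    intro j
    have h := (hΞ j).1
    simpa [Matrix.IsHermitian, Matrix.conjTranspose_eq_transpose_of_trivial] using h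
  have hkey := sum_block_ineq A B C D Ξ hsym hLMI x v
  rw [← hAb, ← hBb, ← hCb, ← hDb, ← hΞb, ← h1, ← h2] at hkey
  have hzv : zb ⬝ᵥ v = yc ⬝ᵥ uc - zb ⬝ᵥ (S *ᵥ zb) := by
    rw [hv, dotProduct_sub]
    congr 1
    rw [dotProduct_mulVec, hycdef, mulVec_transpose]
  have hSz : 0 ≤ zb ⬝ᵥ (S *ᵥ zb) := by simpa using hS.dotProduct_mulVec_nonneg zb
  constructor
  · nlinarith [hkey, hzv]
  · nlinarith [hkey, hzv, hSz]
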